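/- For any B-hedonic game, there exists an individually stable partition. Specifically, letting B* be the largest set constructed by iteratively removing players who like no remaining player (start with B = ∅; repeatedly add to B any player who likes no player in N \ B), the partition consisting of the coalition N \ B* together with singletons {i} for each i ∈ B* is individually stable. -/

import Mathlib

open Finset

/-- A partition of the player set into coalitions: `part i` is the coalition
containing player `i`. -/
structure HPartition (N : Type*) where
  part : N → Finset N
  mem_self : ∀ i, i ∈ part i
  eq_of_mem : ∀ i j : N, j ∈ part i → part j = part i

section Defs

variable {N : Type*} [DecidableEq N]

/-- Strict part of a weak preference over coalitions. -/
def SPref (pref : N → Finset N → Finset N → Prop) (i : N) (S T : Finset N) : Prop :=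
  pref i S T ∧ ¬ pref i T S

/-- `S` is an (existing or empty) coalition of the partition `π`. -/
def IsCoalitionOf (π : HPartition N) (S : Finset N) : Prop :=
  S = ∅ ∨ ∃ j, S = π.part j

/-- Nash stability: no player strictly prefers joining another existing
(possibly empty) coalition. -/
def NashStable (pref : N → Finset N → Finset N → Prop) (π : HPartition N) : Prop :=
  ∀ i S, IsCoalitionOf π S → S ≠ π.part i →
    ¬ SPref pref i (insert i S) (π.part i)

/-- Individual stability: no strictly improving move that all members of the
joined coalition weakly approve. -/
def IndStable (pref : N → Finset N → Finset N → Prop) (π : HPartition N) : Prop :=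
  ∀ i S, IsCoalitionOf π S → S ≠ π.part i →
    ¬ (SPref pref i (insert i S) (π.part i) ∧ ∀ j ∈ S, pref j (insert i S) S)

/-- Contractual individual stability: no strictly improving move approved by the
joined coalition and by the abandoned coalition. -/
def ContIndStable (pref : N → Finset N → Finset N → Prop) (π : HPartition N) : Prop :=
  ∀ i S, IsCoalitionOf π S → S ≠ π.part i →
    ¬ (SPref pref i (insert i S) (π.part i) ∧ (∀ j ∈ S, pref j (insert i S) S) ∧
        (∀ j ∈ π.part i, j ≠ i → pref j ((π.part i).erase i) (π.part i)))

/-- Individual rationality: everyone weakly prefers his coalition to being alone. -/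
def IndRational (pref : N → Finset N → Finset N → Prop) (π : HPartition N) : Prop :=
  ∀ i, pref i (π.part i) {i}

/-- A CIS deviation from `π` to `π'`: player `i` moves to the (possibly empty)
existing coalition `T`, strictly improving, while no member of `T` nor of the
abandoned coalition is worse off. -/
def CISDeviation (pref : N → Finset N → Finset N → Prop) (π π' : HPartition N) : Prop :=
  ∃ i T, IsCoalitionOf π T ∧ T ≠ π.part i ∧ i ∉ T ∧
    SPref pref i (insert i T) (π.part i) ∧
    (∀ j ∈ T, pref j (insert i T) T) ∧
    (∀ j ∈ π.part i, j ≠ i → pref j ((π.part i).erase i) (π.part i)) ∧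
    (∀ k, π'.part k = if k = i ∨ k ∈ T then insert i T else (π.part k).erase i)

/-- The weak relation associated with a (primitive) strict relation. -/
def weakOf (sp : N → Finset N → Finset N → Prop) (i : N) (S T : Finset N) : Prop :=
  ¬ sp i T S

/-- Strict part of a weak preference over players. -/
def strictP (p : N → N → N → Prop) (i j k : N) : Prop := p i j k ∧ ¬ p i k j

/-- Player `j` is unacceptable to `i`: `i ≻ᵢ j`. -/
def unacc (p : N → N → N → Prop) (i j : N) : Prop := strictP p i i j

/-- Player `i` likes `j`: `j ≻ᵢ i`. -/
def likes (p : N → N → N → Prop) (i j : N) : Prop := strictP p i j i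

/-- Each player's preference over players is a complete preorder. -/
def CompletePreorder (p : N → N → N → Prop) : Prop :=
  (∀ i j k, p i j k ∨ p i k j) ∧ (∀ i a b c, p i a b → p i b c → p i a c)

/-- The set of `≿ᵢ`-maximal elements of `J`, with `max ∅ = {i}`. -/
def maxSet (p : N → N → N → Prop) (i : N) (J : Finset N) : Set N :=
  if J = ∅ then {i} else {m | m ∈ J ∧ ∀ j ∈ J, p i m j}

/-- The set of `≿ᵢ`-minimal elements of `J`, with `min ∅ = {i}`. -/
def minSet (p : N → N → N → Prop) (i : N) (J : Finset N) : Set N :=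
  if J = ∅ then {i} else {m | m ∈ J ∧ ∀ j ∈ J, p i j m}

/-- W-hedonic (weak) preference over coalitions: compare worst members. -/
def WPref (p : N → N → N → Prop) (i : N) (S T : Finset N) : Prop :=
  ∀ s ∈ minSet p i (S.erase i), ∀ t ∈ minSet p i (T.erase i), p i s t

/-- WW-hedonic (weak) preference over coalitions. -/
def WWPref (p : N → N → N → Prop) (i : N) (S T : Finset N) : Prop :=
  (∃ j ∈ T.erase i, unacc p i j) ∨ WPref p i S T

/-- BB-hedonic (weak) preference over coalitions. -/
def BBPref (p : N → N → N → Prop) (i : N) (S T : Finset N) : Prop :=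
  (∃ j ∈ T.erase i, unacc p i j) ∨
    ((∀ j ∈ S.erase i, ¬ unacc p i j) ∧ (∀ j ∈ T.erase i, ¬ unacc p i j) ∧
      ∀ s ∈ maxSet p i (S.erase i), ∀ t ∈ maxSet p i (T.erase i), p i s t)

/-- B-hedonic strict preference over coalitions: better best member, or
indifferent best members and smaller size. -/
def BStrict (p : N → N → N → Prop) (i : N) (S T : Finset N) : Prop :=
  (∀ s ∈ maxSet p i (S.erase i), ∀ t ∈ maxSet p i (T.erase i), strictP p i s t) ∨
    ((∀ s ∈ maxSet p i (S.erase i), ∀ t ∈ maxSet p i (T.erase i), p i s t ∧ p i t s) ∧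
      S.card < T.card)

/-- B-hedonic weak preference over coalitions. -/
def BWeak (p : N → N → N → Prop) : N → Finset N → Finset N → Prop :=
  weakOf (BStrict p)

end Defs


section Aux

variable {N : Type*} [DecidableEq N]

omit [DecidableEq N] in
lemma cp_refl {p : N → N → N → Prop} (hp : CompletePreorder p) (i j : N) : p i j j :=
  (hp.1 i j j).elim id id

lemma exists_max {p : N → N → N → Prop} (hp : CompletePreorder p) (i : N) :
    ∀ J : Finset N, J.Nonempty → ∃ m ∈ J, ∀ l ∈ J, p i m l := by
  intro J
  induction J using Finset.induction_on with
  | empty => intro h; exact absurd h (by simp)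
  | @insert a s ha ih =>
    intro _
    rcases s.eq_empty_or_nonempty with rfl | hs
    · exact ⟨a, by simp, by simpa using cp_refl hp i a⟩
    · obtain ⟨m, hm, hmax⟩ := ih hs
      rcases hp.1 i a m with h | h
      · refine ⟨a, by simp, ?_⟩
        intro l hl
        rcases Finset.mem_insert.mp hl with rfl | hl
        · exact cp_refl hp i l
        · exact hp.2 i a m l h (hmax l hl)
      · refine ⟨m, by simp [hm], ?_⟩
        intro l hl
        rcases Finset.mem_insert.mp hl with rfl | hl
        · exact h
        · exact hmax l hl

lemma mem_maxSet_iff {p : N → N → N → Prop} {i m : N} {J : Finset N} (hJ : J ≠ ∅) :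
    m ∈ maxSet p i J ↔ m ∈ J ∧ ∀ l ∈ J, p i m l := by
  rw [maxSet, if_neg hJ]; rfl

lemma mem_maxSet_empty (p : N → N → N → Prop) (i : N) : i ∈ maxSet p i (∅ : Finset N) := by
  rw [maxSet, if_pos rfl]; exact rfl

lemma mem_maxSet_singleton {p : N → N → N → Prop} (hp : CompletePreorder p) (i j : N) :
    j ∈ maxSet p i {j} := by
  rw [mem_maxSet_iff (Finset.singleton_ne_empty j)]
  exact ⟨Finset.mem_singleton_self j, fun l hl => by
    rw [Finset.mem_singleton.mp hl]; exact cp_refl hp i j⟩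

/-- If `i` is not liked by `k`, then `k` strictly prefers staying alone
to having `i` join. -/
lemma bstrict_singleton {p : N → N → N → Prop} (hp : CompletePreorder p) {i k : N}
    (hik : i ≠ k) (h : ¬ likes p k i) : BStrict p k {k} (insert i {k}) := by
  have he1 : ({k} : Finset N).erase k = ∅ := Finset.erase_singleton k
  have he2 : (insert i ({k} : Finset N)).erase k = {i} := by
    ext x
    simp only [Finset.mem_erase, Finset.mem_insert, Finset.mem_singleton]
    constructor
    · rintro ⟨hx, hx' | hx'⟩
      · exact hx'
      · exact absurd hx' hx
    · rintro rfl; exact ⟨hik, Or.inl rfl⟩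
  have hcard : ({k} : Finset N).card < (insert i ({k} : Finset N)).card := by
    rw [Finset.card_insert_of_notMem (by simp [hik])]
    simp
  rw [likes, strictP] at h
  push_neg at h
  by_cases hik' : p k i k
  · right
    refine ⟨?_, hcard⟩
    rw [he1, he2]
    intro s hs t ht
    have hs' : s = k := hs
    have ht' : t = i := Finset.mem_singleton.mp
      ((mem_maxSet_iff (Finset.singleton_ne_empty i)).mp ht).1
    rw [hs', ht']
    exact ⟨h hik', hik'⟩
  · left
    rw [he1, he2]
    intro s hs t ht
    have hs' : s = k := hs
    have ht' : t = i := Finset.mem_singleton.mp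
      ((mem_maxSet_iff (Finset.singleton_ne_empty i)).mp ht).1
    rw [hs', ht']
    exact ⟨(hp.1 k k i).resolve_right hik', hik'⟩

end Aux

/-- every B-hedonic game has an individually stable partition;
specifically, with `Bstar` the least set closed under removing players who like
no remaining player, the partition consisting of `N \ Bstar` together with
singletons for the members of `Bstar` is individually stable. -/
theorem b_is_exists {N : Type*} [DecidableEq N] [Fintype N]
    (p : N → N → N → Prop) (hp : CompletePreorder p)
    (Bstar : Finset N)
    (hclosed : ∀ i, (∀ j, j ∉ Bstar → j ≠ i → ¬ likes p i j) → i ∈ Bstar)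
    (hleast : ∀ B : Finset N,
      (∀ i, (∀ j, j ∉ B → j ≠ i → ¬ likes p i j) → i ∈ B) → Bstar ⊆ B) :
    ∃ π : HPartition N,
      (∀ i, π.part i = if i ∈ Bstar then {i} else Finset.univ \ Bstar) ∧
      IndStable (BWeak p) π := by
  classical
  -- basic consequences of Bstar being the least closed set
  have L0 : ∀ i, i ∉ Bstar → ∃ j, j ∉ Bstar ∧ j ≠ i ∧ likes p i j := by
    intro i hi
    by_contra h
    push_neg at h
    exact hi (hclosed i h)
  have L1 : ∀ i ∈ Bstar, ∀ l, l ∉ Bstar → l ≠ i → ¬ likes p i l := by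
    intro i hi l hl hli
    by_contra hlike
    have hB : ∀ k, (∀ j, j ∉ Bstar.erase i → j ≠ k → ¬ likes p k j) → k ∈ Bstar.erase i := by
      intro k hk
      have hkB : k ∈ Bstar :=
        hclosed k (fun j hj => hk j (fun hj' => hj (Finset.mem_of_mem_erase hj')))
      rcases eq_or_ne k i with rfl | hne
      · exact absurd hlike (hk l (fun h' => hl (Finset.mem_of_mem_erase h')) hli)
      · exact Finset.mem_erase.mpr ⟨hne, hkB⟩
    have := hleast _ hB hi
    exact (Finset.mem_erase.mp this).1 rfl
  have L2 : ∀ i ∈ Bstar, ∀ k ∈ Bstar, i ≠ k → likes p i k → likes p k i → False := by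
    intro i hi k hk hik hlik hlki
    have hB : ∀ m, (∀ j, j ∉ (Bstar.erase i).erase k → j ≠ m → ¬ likes p m j) →
        m ∈ (Bstar.erase i).erase k := by
      intro m hm
      have hmB : m ∈ Bstar := hclosed m (fun j hj => hm j
        (fun hj' => hj (Finset.mem_of_mem_erase (Finset.mem_of_mem_erase hj'))))
      have hmi : m ≠ i := by
        rintro rfl
        have hknot : k ∉ (Bstar.erase m).erase k := fun h => (Finset.mem_erase.mp h).1 rfl
        exact hm k hknot (Ne.symm hik) hlik
      have hmk : m ≠ k := by
        rintro rfl
        have hinot : i ∉ (Bstar.erase i).erase m := fun h =>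
          (Finset.mem_erase.mp (Finset.mem_of_mem_erase h)).1 rfl
        exact hm i hinot hik hlki
      exact Finset.mem_erase.mpr ⟨hmk, Finset.mem_erase.mpr ⟨hmi, hmB⟩⟩
    have := hleast _ hB hi
    exact (Finset.mem_erase.mp (Finset.mem_of_mem_erase this)).1 rfl
  refine ⟨⟨fun i => if i ∈ Bstar then {i} else Finset.univ \ Bstar, ?_, ?_⟩, fun _ => rfl, ?_⟩
  · intro i
    by_cases h : i ∈ Bstar <;> simp [h]
  · intro i j hj
    by_cases h : i ∈ Bstar
    · simp only [if_pos h] at hj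
      have : j = i := Finset.mem_singleton.mp hj
      subst this; rfl
    · simp only [if_neg h] at hj
      have hj' : j ∉ Bstar := (Finset.mem_sdiff.mp hj).2
      simp only [if_neg h, if_neg hj']
  · intro i S hS hSne hdev
    obtain ⟨⟨hw, hnw⟩, happ⟩ := hdev
    have hBS : BStrict p i (insert i S)
        (if i ∈ Bstar then {i} else Finset.univ \ Bstar) := not_not.mp hnw
    replace hSne : S ≠ (if i ∈ Bstar then {i} else Finset.univ \ Bstar) := hSne
    have hii0 : i ∈ maxSet p i (({i} : Finset N).erase i) := by
      rw [Finset.erase_singleton]; exact mem_maxSet_empty p i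
    by_cases hi : i ∈ Bstar
    · rw [if_pos hi] at hBS hSne
      rcases hS with rfl | ⟨j, rfl⟩
      · -- moving to the empty coalition: the result is {i} itself
        have he : (insert i (∅ : Finset N)).erase i =
            ({i} : Finset N).erase i := by
          rw [Finset.erase_insert (Finset.notMem_empty i), Finset.erase_singleton]
        rcases hBS with hA | ⟨_, hc⟩
        · rw [he] at hA
          exact (hA i hii0 i hii0).2 (hA i hii0 i hii0).1
        · simp at hc
      · dsimp only at hSne hBS happ
        by_cases hj : j ∈ Bstar
        · rw [if_pos hj] at hSne hBS happ
          have hji : j ≠ i := by rintro rfl; exact hSne rfl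
          have hiS : i ∉ ({j} : Finset N) := by
            simp only [Finset.mem_singleton]; exact fun h => hji h.symm
          have hjm : j ∈ maxSet p i ((insert i ({j} : Finset N)).erase i) := by
            rw [Finset.erase_insert hiS]; exact mem_maxSet_singleton hp i j
          have hlij : likes p i j := by
            rcases hBS with hA | ⟨_, hc⟩
            · exact hA j hjm i hii0
            · rw [Finset.card_insert_of_notMem hiS] at hc
              simp at hc
          by_cases hlji : likes p j i
          · exact L2 i hi j hj (Ne.symm hji) hlij hlji
          · exact happ j (Finset.mem_singleton_self j)
              (bstrict_singleton hp (Ne.symm hji) hlji)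
        · rw [if_neg hj] at hSne hBS
          have hiS : i ∉ Finset.univ \ Bstar := by simp [hi]
          have hne : (Finset.univ \ Bstar).Nonempty := ⟨j, by simp [hj]⟩
          obtain ⟨m, hm, hmax⟩ := exists_max hp i _ hne
          have hmm : m ∈ maxSet p i ((insert i (Finset.univ \ Bstar)).erase i) := by
            rw [Finset.erase_insert hiS, mem_maxSet_iff hne.ne_empty]
            exact ⟨hm, hmax⟩
          rcases hBS with hA | ⟨_, hc⟩
          · exact L1 i hi m (Finset.mem_sdiff.mp hm).2
              (fun h => hiS (h ▸ hm)) (hA m hmm i hii0)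
          · rw [Finset.card_insert_of_notMem hiS, Finset.card_singleton] at hc
            have := Finset.card_pos.mpr hne
            omega
    · rw [if_neg hi] at hBS hSne
      obtain ⟨j0, hj0B, hj0i, hj0like⟩ := L0 i hi
      have hρ : j0 ∈ (Finset.univ \ Bstar).erase i := by
        simp [Finset.mem_erase, hj0i, hj0B]
      have hρne : (Finset.univ \ Bstar).erase i ≠ ∅ := Finset.ne_empty_of_mem hρ
      obtain ⟨m, hm, hmax⟩ := exists_max hp i _ ⟨j0, hρ⟩
      have hm2 : ¬ p i i m := fun h => hj0like.2 (hp.2 i i m j0 h (hmax j0 hρ))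
      have hmm : m ∈ maxSet p i ((Finset.univ \ Bstar).erase i) :=
        (mem_maxSet_iff hρne).mpr ⟨hm, hmax⟩
      rcases hS with rfl | ⟨j, rfl⟩
      · -- moving to the empty coalition: {i} vs the big coalition
        have he : (insert i (∅ : Finset N)).erase i = ({i} : Finset N).erase i := by
          rw [Finset.erase_insert (Finset.notMem_empty i), Finset.erase_singleton]
        rcases hBS with hA | ⟨hA, _⟩
        · rw [he] at hA
          exact hm2 (hA i hii0 m hmm).1
        · rw [he] at hA
          exact hm2 (hA i hii0 m hmm).1
      · dsimp only at hSne happ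
        by_cases hj : j ∈ Bstar
        · rw [if_pos hj] at hSne happ
          have hij : i ≠ j := fun h => hi (h ▸ hj)
          exact happ j (Finset.mem_singleton_self j)
            (bstrict_singleton hp hij (L1 j hj i hi hij))
        · rw [if_neg hj] at hSne
          exact hSne rfl
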